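/- ∑_{n=1}^∞ (-1)^n H̄_n / n = -π^2/12 - (1/2) log^2(2). -/

import Mathlib

open Real Filter Finset

noncomputable def Li (m : ℕ) (x : ℝ) : ℝ := ∑' n : ℕ, x ^ (n + 1) / (n + 1 : ℝ) ^ m

noncomputable def H (p n : ℕ) : ℝ := ∑ j ∈ Finset.Icc 1 n, 1 / (j : ℝ) ^ p

noncomputable def Hbar (p n : ℕ) : ℝ := ∑ j ∈ Finset.Icc 1 n, (-1 : ℝ) ^ (j - 1) / (j : ℝ) ^ p

lemma Hbar_succ (n : ℕ) : Hbar 1 (n + 1) = Hbar 1 n + (-1 : ℝ) ^ n / (n + 1 : ℝ) := by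
  unfold Hbar
  rw [Finset.sum_Icc_succ_top (by omega)]
  push_cast
  simp

lemma H_succ (p n : ℕ) : H p (n + 1) = H p n + 1 / ((n : ℝ) + 1) ^ p := by
  unfold H
  rw [Finset.sum_Icc_succ_top (by omega)]
  push_cast
  ring

lemma H_eq_harmonic (n : ℕ) : H 1 n = (harmonic n : ℝ) := by
  rw [H, harmonic_eq_sum_Icc]
  push_cast
  simp [one_div]

lemma Hbar_two_mul (k : ℕ) : Hbar 1 (2 * k) = H 1 (2 * k) - H 1 k := by
  induction k with
  | zero => simp [Hbar, H]
  | succ k ih =>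
    have h2 : 2 * (k + 1) = (2 * k + 1) + 1 := by ring
    rw [h2, Hbar_succ, Hbar_succ, ih, H_succ, H_succ 1 (2 * k), H_succ 1 k]
    have hpos : (0:ℝ) < (k:ℝ) + 1 := by positivity
    have he : (-1 : ℝ) ^ (2 * k) = 1 := by
      rw [pow_mul]; norm_num
    have ho : (-1 : ℝ) ^ (2 * k + 1) = -1 := by
      rw [pow_succ, he]; ring
    rw [he, ho]
    push_cast
    field_simp
    ring

lemma tendsto_even_odd {f : ℕ → ℝ} {L : ℝ}
    (he : Tendsto (fun k => f (2 * k)) atTop (nhds L))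
    (ho : Tendsto (fun k => f (2 * k + 1)) atTop (nhds L)) :
    Tendsto f atTop (nhds L) := by
  rw [Metric.tendsto_atTop] at he ho ⊢
  intro ε hε
  obtain ⟨N₁, h₁⟩ := he ε hε
  obtain ⟨N₂, h₂⟩ := ho ε hε
  have hM1 := le_max_left N₁ N₂
  have hM2 := le_max_right N₁ N₂
  refine ⟨2 * (max N₁ N₂) + 1, fun n hn => ?_⟩
  rcases Nat.even_or_odd n with ⟨k, hk⟩ | ⟨k, hk⟩
  · have hk' : n = 2 * k := by omega
    rw [hk']
    exact h₁ k (by omega)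
  · have hk' : n = 2 * k + 1 := by omega
    rw [hk']
    exact h₂ k (by omega)

lemma tendsto_two_mul : Tendsto (fun k : ℕ => 2 * k) atTop atTop :=
  tendsto_atTop_mono (fun n => by simp only [id_eq]; omega) tendsto_id

lemma tendsto_Hbar_log_two : Tendsto (fun n => Hbar 1 n) atTop (nhds (Real.log 2)) := by
  have hγ := Real.tendsto_harmonic_sub_log
  have hH : Tendsto (fun n : ℕ => H 1 n - Real.log n) atTop (nhds Real.eulerMascheroniConstant) := by
    apply hγ.congr
    intro n; rw [H_eq_harmonic]
  have h2k : Tendsto (fun k : ℕ => H 1 (2 * k) - Real.log (2 * k)) atTop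
      (nhds Real.eulerMascheroniConstant) := by
    have := hH.comp tendsto_two_mul
    apply this.congr
    intro k; simp
  have heven : Tendsto (fun k => Hbar 1 (2 * k)) atTop (nhds (Real.log 2)) := by
    have key : Tendsto (fun k : ℕ => (H 1 (2 * k) - Real.log (2 * k)) - (H 1 k - Real.log k)
        + Real.log 2) atTop (nhds (Real.eulerMascheroniConstant - Real.eulerMascheroniConstant
        + Real.log 2)) := ((h2k.sub hH).add tendsto_const_nhds)
    rw [sub_self, zero_add] at key
    apply key.congr'
    filter_upwards [eventually_ge_atTop 1] with k hk
    have hk0 : (k : ℝ) ≠ 0 := Nat.cast_ne_zero.mpr (by omega)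
    rw [Hbar_two_mul]
    have hlog : Real.log (2 * (k:ℝ)) = Real.log 2 + Real.log k :=
      Real.log_mul (by norm_num) hk0
    rw [hlog]
    ring
  have hodd : Tendsto (fun k => Hbar 1 (2 * k + 1)) atTop (nhds (Real.log 2)) := by
    have hz : Tendsto (fun k : ℕ => (-1 : ℝ) ^ (2 * k) / ((2 * k : ℕ) + 1 : ℝ)) atTop (nhds 0) := by
      have h1 : Tendsto (fun k : ℕ => 1 / ((2 * k : ℕ) + 1 : ℝ)) atTop (nhds 0) := by
        apply squeeze_zero (g := fun k : ℕ => 1 / ((k : ℝ) + 1))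
        · intro k; positivity
        · intro k
          apply one_div_le_one_div_of_le (by positivity)
          push_cast; linarith
        · exact tendsto_one_div_add_atTop_nhds_zero_nat
      refine h1.congr fun k => ?_
      rw [pow_mul, neg_one_sq, one_pow]
    have := heven.add hz
    rw [add_zero] at this
    apply this.congr
    intro k
    rw [Hbar_succ]
  exact tendsto_even_odd heven hodd

lemma partial_sum_eq (N : ℕ) :
    ∑ n ∈ Finset.Icc 1 N, (-1 : ℝ) ^ n * Hbar 1 n / (n : ℝ)
      = -((Hbar 1 N) ^ 2 + H 2 N) / 2 := by
  induction N with
  | zero => simp [Hbar, H]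
  | succ N ih =>
    rw [Finset.sum_Icc_succ_top (by omega), ih, Hbar_succ, H_succ]
    have hN : ((N : ℝ) + 1) ≠ 0 := by positivity
    push_cast
    rw [pow_succ]
    rcases Nat.even_or_odd N with hpar | hpar
    · rw [hpar.neg_one_pow]; field_simp; rw [pow_succ (-1 : ℝ) N, hpar.neg_one_pow]; ring
    · rw [hpar.neg_one_pow]; field_simp; rw [pow_succ (-1 : ℝ) N, hpar.neg_one_pow]; ring

lemma tendsto_H2 : Tendsto (fun n => H 2 n) atTop (nhds (Real.pi ^ 2 / 6)) := by
  have h := hasSum_zeta_two.tendsto_sum_nat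
  have h' := h.comp (tendsto_add_atTop_nat 1)
  apply h'.congr
  intro n
  simp only [Function.comp_apply, Finset.sum_range_succ']
  rw [H, ← Finset.Ico_add_one_right_eq_Icc, Finset.sum_Ico_eq_sum_range]
  norm_num
  exact Finset.sum_congr rfl fun i _ => by ring_nf

theorem stmt14 :
    Filter.Tendsto (fun N => ∑ n ∈ Finset.Icc 1 N, (-1 : ℝ) ^ n * Hbar 1 n / (n : ℝ))
      Filter.atTop
      (nhds (-(Real.pi ^ 2) / 12 - (1 / 2) * (Real.log 2) ^ 2)) := by
  have key : Tendsto (fun N => -((Hbar 1 N) ^ 2 + H 2 N) / 2) atTop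
      (nhds (-((Real.log 2) ^ 2 + Real.pi ^ 2 / 6) / 2)) := by
    exact (((tendsto_Hbar_log_two.pow 2).add tendsto_H2).neg).div_const 2
  have : (-(((Real.log 2) ^ 2) + Real.pi ^ 2 / 6) / 2)
      = -(Real.pi ^ 2) / 12 - (1 / 2) * (Real.log 2) ^ 2 := by ring
  rw [this] at key
  apply key.congr
  intro N
  rw [partial_sum_eq]
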